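/- (Normal forms are complete up to their depths.) Let l be one of the logics K, D, T, K4, KD4, S4, K+5, D+5, T+5, K4+5, KD4+5, S4+5, let P be a finite set of propositional variables, and let d ≥ 0. For every normal form ψ ∈ F_P^d and every formula χ ∈ L(P) with md(χ) ≤ d, either ψ→χ is valid for l or ψ→¬χ is valid for l. -/
import Mathlib


/-- Modal formulas in negation normal form, as in the paper:
φ ::= ⊥ | ⊤ | p | ¬p | φ∧φ | φ∨φ | □φ | ◇φ. -/
inductive Form : Type where
  | bot : Form
  | top : Form
  | pos : ℕ → Form
  | npos : ℕ → Form
  | and : Form → Form → Form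
  | or : Form → Form → Form
  | box : Form → Form
  | dia : Form → Form
deriving DecidableEq

namespace Form

/-- Negation, defined as usual (by De Morgan dualities). -/
def neg : Form → Form
  | bot => top
  | top => bot
  | pos p => npos p
  | npos p => pos p
  | and φ ψ => or φ.neg ψ.neg
  | or φ ψ => and φ.neg ψ.neg
  | box φ => dia φ.neg
  | dia φ => box φ.neg

/-- Implication φ → ψ, defined as usual. -/
def imp (φ ψ : Form) : Form := or φ.neg ψ

/-- Bi-implication φ ↔ ψ, defined as usual. -/
def biimp (φ ψ : Form) : Form := and (imp φ ψ) (imp ψ φ)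

/-- P(φ): the set of propositional variables occurring in φ. -/
def vars : Form → Finset ℕ
  | bot => ∅
  | top => ∅
  | pos p => {p}
  | npos p => {p}
  | and φ ψ => φ.vars ∪ ψ.vars
  | or φ ψ => φ.vars ∪ ψ.vars
  | box φ => φ.vars
  | dia φ => φ.vars

/-- Modal depth. -/
def md : Form → ℕ
  | bot => 0
  | top => 0
  | pos _ => 0
  | npos _ => 0
  | and φ ψ => max φ.md ψ.md
  | or φ ψ => max φ.md ψ.md
  | box φ => φ.md + 1
  | dia φ => φ.md + 1

/-- sub(φ): the set of subformulas of φ. -/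
def subf : Form → Finset Form
  | bot => {bot}
  | top => {top}
  | pos p => {pos p}
  | npos p => {npos p}
  | and φ ψ => insert (and φ ψ) (φ.subf ∪ ψ.subf)
  | or φ ψ => insert (or φ ψ) (φ.subf ∪ ψ.subf)
  | box φ => insert (box φ) φ.subf
  | dia φ => insert (dia φ) φ.subf

/-- s̄ub(φ) = sub(φ) ∪ {¬ψ : ψ ∈ sub(φ)}. -/
def subBar (φ : Form) : Finset Form := φ.subf ∪ φ.subf.image neg

/-- □^k φ : k nested boxes. -/
def boxIter : ℕ → Form → Form
  | 0, φ => φ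
  | n + 1, φ => box (boxIter n φ)

def isDia : Form → Bool
  | dia _ => true
  | _ => false

def isBox : Form → Bool
  | box _ => true
  | _ => false

end Form

/-- Big conjunction over a finite set of formulas (⋀∅ = ⊤). -/
noncomputable def bigAnd (s : Finset Form) : Form := s.toList.foldr Form.and Form.top

/-- Big disjunction over a finite set of formulas (⋁∅ = ⊥). -/
noncomputable def bigOr (s : Finset Form) : Form := s.toList.foldr Form.or Form.bot

/-- th(a) = ⋀ a. -/
noncomputable def th (a : Finset Form) : Form := bigAnd a

/-- A finite Kripke model: a nonempty finite set of states, an accessibility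
relation and a valuation. -/
structure Model : Type 1 where
  W : Type
  nonempty : Nonempty W
  finite : Finite W
  R : W → W → Prop
  V : W → Set ℕ

/-- Satisfaction M,w ⊨ φ. -/
def Model.sat (M : Model) : M.W → Form → Prop
  | _, .bot => False
  | _, .top => True
  | w, .pos p => p ∈ M.V w
  | w, .npos p => p ∉ M.V w
  | w, .and φ ψ => M.sat w φ ∧ M.sat w ψ
  | w, .or φ ψ => M.sat w φ ∨ M.sat w ψ
  | w, .box φ => ∀ v, M.R w v → M.sat v φ
  | w, .dia φ => ∃ v, M.R w v ∧ M.sat v φ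

/-- The six base logics K, D, T, K4, KD4, S4. -/
inductive BaseLogic : Type where
  | K | D | T | K4 | KD4 | S4
deriving DecidableEq

/-- A logic: a base logic, possibly extended by axiom 5. -/
structure Logic : Type where
  base : BaseLogic
  has5 : Bool
deriving DecidableEq

def Logic.K : Logic := ⟨.K, false⟩
def Logic.D : Logic := ⟨.D, false⟩
def Logic.T : Logic := ⟨.T, false⟩
def Logic.K4 : Logic := ⟨.K4, false⟩
def Logic.KD4 : Logic := ⟨.KD4, false⟩
def Logic.S4 : Logic := ⟨.S4, false⟩

/-- l + 5. -/
def BaseLogic.plus5 (b : BaseLogic) : Logic := ⟨b, true⟩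

/-- M is a model for the logic l (frame conditions). -/
def Model.IsFor (M : Model) (l : Logic) : Prop :=
  (match l.base with
    | .K => True
    | .D => ∀ w, ∃ v, M.R w v
    | .T => ∀ w, M.R w w
    | .K4 => ∀ a b c, M.R a b → M.R b c → M.R a c
    | .KD4 => (∀ w, ∃ v, M.R w v) ∧ (∀ a b c, M.R a b → M.R b c → M.R a c)
    | .S4 => (∀ w, M.R w w) ∧ (∀ a b c, M.R a b → M.R b c → M.R a c))
  ∧ (l.has5 = true → ∀ a b c, M.R a b → M.R a c → M.R b c)

/-- φ is satisfiable for l: satisfied at some state of some finite model for l. -/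
def Satisfiable (l : Logic) (φ : Form) : Prop :=
  ∃ M : Model, M.IsFor l ∧ ∃ w : M.W, M.sat w φ

/-- φ is valid for l: satisfied at every state of every finite model for l. -/
def Valid (l : Logic) (φ : Form) : Prop :=
  ∀ M : Model, M.IsFor l → ∀ w : M.W, M.sat w φ

/-- φ is complete for l: for every ψ ∈ L(P(φ)), φ→ψ or φ→¬ψ is valid for l. -/
def Complete (l : Logic) (φ : Form) : Prop :=
  ∀ ψ : Form, ψ.vars ⊆ φ.vars → (Valid l (φ.imp ψ) ∨ Valid l (φ.imp ψ.neg))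

/-- Z is a bisimulation modulo P from M to M'. -/
def IsBisim (P : Set ℕ) (M M' : Model) (Z : M.W → M'.W → Prop) : Prop :=
  (∃ s s', Z s s') ∧
  ∀ s s', Z s s' →
    (M.V s ∩ P = M'.V s' ∩ P) ∧
    (∀ t, M.R s t → ∃ t', M'.R s' t' ∧ Z t t') ∧
    (∀ t', M'.R s' t' → ∃ t, M.R s t ∧ Z t t')

/-- (M,a) ∼_P (M',a'). -/
def Bisimilar (P : Set ℕ) (M : Model) (a : M.W) (M' : Model) (a' : M'.W) : Prop :=
  ∃ Z, IsBisim P M M' Z ∧ Z a a'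

/-- (M,a) ≡_P (M',a'): the two pointed models satisfy the same formulas of L(P). -/
def EquivP (P : Set ℕ) (M : Model) (a : M.W) (M' : Model) (a' : M'.W) : Prop :=
  ∀ φ : Form, ↑φ.vars ⊆ P → (M.sat a φ ↔ M'.sat a' φ)

/-- (M,s) is flat (for base logic l, with axiom 5): the carrier is {s}∪W and
R = R1 ∪ R2 with R1 ⊆ {s}×W, R2 an equivalence relation on W, and s ∈ W if
l ∈ {T,S4}. -/
def Flat (l : BaseLogic) (M : Model) (s : M.W) : Prop :=
  ∃ W : Set M.W, (∀ w, w = s ∨ w ∈ W) ∧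
    ∃ R1 R2 : M.W → M.W → Prop,
      (∀ x y, M.R x y ↔ (R1 x y ∨ R2 x y)) ∧
      (∀ x y, R1 x y → x = s ∧ y ∈ W) ∧
      (∀ x y, R2 x y → x ∈ W ∧ y ∈ W) ∧
      (∀ x ∈ W, R2 x x) ∧
      (∀ x y, R2 x y → R2 y x) ∧
      (∀ x y z, R2 x y → R2 y z → R2 x z) ∧
      ((l = .T ∨ l = .S4) → s ∈ W)

/-- A maximal state for l with respect to φ: a maximally l-consistent subset
of s̄ub(φ). -/
def MaxState (l : Logic) (φ : Form) (a : Finset Form) : Prop :=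
  a ⊆ φ.subBar ∧ Satisfiable l (th a) ∧ ∀ ψ ∈ φ.subf, ψ ∈ a ∨ ψ.neg ∈ a

/-- D(x) = {◇ψ : ◇ψ ∈ x}. -/
def DSet (x : Finset Form) : Finset Form := x.filter (fun ψ => ψ.isDia = true)

/-- B(x) = {□ψ : □ψ ∈ x}. -/
def BSet (x : Finset Form) : Finset Form := x.filter (fun ψ => ψ.isBox = true)

/-- A view: a parent-state and a finite set of children-states. -/
structure View : Type where
  parent : Finset Form
  children : Finset (Finset Form)

/-- The view is with respect to φ: all its states are subsets of s̄ub(φ). -/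
def View.WF (φ : Form) (S : View) : Prop :=
  S.parent ⊆ φ.subBar ∧ ∀ c ∈ S.children, c ⊆ φ.subBar

/-- A set of formulas is l-closed. -/
def LClosed (l : Logic) (P : Finset ℕ) (s : Finset Form) : Prop :=
  (∀ φ1 φ2 : Form, Form.and φ1 φ2 ∈ s → φ1 ∈ s ∧ φ2 ∈ s) ∧
  (∀ φ1 φ2 : Form, Form.or φ1 φ2 ∈ s → φ1 ∈ s ∨ φ2 ∈ s) ∧
  ((l.base = .T ∨ l.base = .S4) → ∀ ψ : Form, Form.box ψ ∈ s → ψ ∈ s) ∧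
  (∀ p ∈ P, Form.pos p ∈ s ∨ Form.npos p ∈ s)

/-- The view S is l-complete. -/
def ViewLComplete (l : Logic) (P : Finset ℕ) (S : View) : Prop :=
  LClosed l P S.parent ∧
  (∀ c ∈ S.children, LClosed l P c) ∧
  (∀ ψ : Form, Form.dia ψ ∈ S.parent → ∃ c ∈ S.children, ψ ∈ c) ∧
  (∀ ψ : Form, Form.box ψ ∈ S.parent → ∀ c ∈ S.children, ψ ∈ c) ∧
  ((l.base = .K4 ∨ l.base = .KD4 ∨ l.base = .S4) →
    ∀ ψ : Form, Form.box ψ ∈ S.parent → ∀ c ∈ S.children, Form.box ψ ∈ c) ∧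
  (l.base = .KD4 → S.children.Nonempty)

/-- The view S is consistent for l: every one of its states is consistent. -/
def ViewConsistent (l : Logic) (S : View) : Prop :=
  Satisfiable l (th S.parent) ∧ ∀ c ∈ S.children, Satisfiable l (th c)

/-- d = max{md(th(c')) : c' ∈ C(S)}. -/
noncomputable def childDepth (S : View) : ℕ := S.children.sup (fun c => (th c).md)

/-- A K-maximal child-state: a maximally K-consistent subset of s̄ub_d(φ). -/
def KMaxChild (φ : Form) (d : ℕ) (c : Finset Form) : Prop :=
  c ⊆ φ.subBar.filter (fun ψ => ψ.md ≤ d) ∧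
  Satisfiable Logic.K (th c) ∧
  ∀ ψ ∈ φ.subf, ψ.md ≤ d → (ψ ∈ c ∨ ψ.neg ∈ c)

/-- S' completes S (for logic l, with respect to φ). -/
def ViewCompletes (l : Logic) (φ : Form) (S' S : View) : Prop :=
  ViewLComplete l φ.vars S' ∧
  S.parent ⊆ S'.parent ∧
  (∀ a ∈ S.children, ∃ a' ∈ S'.children, a ⊆ a') ∧
  (l.base = .K → ∀ a' ∈ S'.children, KMaxChild φ (childDepth S') a') ∧
  (l.base ≠ .K → ∀ a' ∈ S'.children, MaxState l φ a')

/-- The depth-0 normal form ⋀_{p∈S} p ∧ ⋀_{p∈P∖S} ¬p. -/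
noncomputable def nf0 (P S : Finset ℕ) : Form :=
  Form.and (bigAnd (S.image Form.pos)) (bigAnd ((P \ S).image Form.npos))

/-- Fine's normal forms F_P^d. -/
noncomputable def NF (P : Finset ℕ) : ℕ → Set Form
  | 0 => { χ | ∃ S ⊆ P, χ = nf0 P S }
  | d + 1 => { χ | ∃ S : Finset Form, ↑S ⊆ NF P d ∧ ∃ S0 ⊆ P,
      χ = Form.and (nf0 P S0)
            (Form.and (bigAnd (S.image Form.dia)) (Form.box (bigOr S))) }

/-- φ is complete up to its depth for l. -/
def CompleteUpToDepth (l : Logic) (φ : Form) : Prop :=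
  ∀ ψ : Form, ψ.vars ⊆ φ.vars → ψ.md ≤ φ.md →
    (Valid l (φ.imp ψ) ∨ Valid l (φ.imp ψ.neg))

lemma sat_neg (M : Model) (φ : Form) : ∀ w, M.sat w φ.neg ↔ ¬ M.sat w φ := by
  induction φ with
  | bot => intro w; simp [Form.neg, Model.sat]
  | top => intro w; simp [Form.neg, Model.sat]
  | pos p => intro w; simp [Form.neg, Model.sat]
  | npos p => intro w; simp [Form.neg, Model.sat]
  | and a b iha ihb => intro w; simp [Form.neg, Model.sat, iha, ihb]; try tauto
  | or a b iha ihb => intro w; simp [Form.neg, Model.sat, iha, ihb]; try tauto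
  | box a ih => intro w; simp [Form.neg, Model.sat, ih]
  | dia a ih => intro w; simp [Form.neg, Model.sat, ih]

lemma sat_bigAnd (M : Model) (w : M.W) (s : Finset Form) :
    M.sat w (bigAnd s) ↔ ∀ φ ∈ s, M.sat w φ := by
  unfold bigAnd
  rw [show (∀ φ ∈ s, M.sat w φ) ↔ ∀ φ ∈ s.toList, M.sat w φ by simp]
  induction s.toList with
  | nil => simp [Model.sat]
  | cons a t ih => simp [Model.sat, ih]

lemma sat_bigOr (M : Model) (w : M.W) (s : Finset Form) :
    M.sat w (bigOr s) ↔ ∃ φ ∈ s, M.sat w φ := by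
  unfold bigOr
  rw [show (∃ φ ∈ s, M.sat w φ) ↔ ∃ φ ∈ s.toList, M.sat w φ by simp]
  induction s.toList with
  | nil => simp [Model.sat]
  | cons a t ih => simp [Model.sat, ih]

lemma nf0_val (M : Model) (w : M.W) (P S : Finset ℕ)
    (h : M.sat w (nf0 P S)) : ∀ p ∈ P, (p ∈ M.V w ↔ p ∈ S) := by
  obtain ⟨h1, h2⟩ := h
  rw [sat_bigAnd] at h1
  rw [sat_bigAnd] at h2
  intro p hp
  constructor
  · intro hv
    by_contra hns
    exact (h2 (Form.npos p) (Finset.mem_image_of_mem _ (Finset.mem_sdiff.mpr ⟨hp, hns⟩))) hv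
  · intro hs
    exact h1 (Form.pos p) (Finset.mem_image_of_mem _ hs)

lemma agree0 (M M' : Model) (w : M.W) (w' : M'.W) (P : Finset ℕ)
    (hval : ∀ p ∈ P, (p ∈ M.V w ↔ p ∈ M'.V w')) :
    ∀ χ : Form, χ.vars ⊆ P → χ.md = 0 → (M.sat w χ ↔ M'.sat w' χ) := by
  intro χ
  induction χ with
  | bot => intro _ _; simp [Model.sat]
  | top => intro _ _; simp [Model.sat]
  | pos p => intro hv _; exact hval p (hv (by simp [Form.vars]))
  | npos p => intro hv _
              simp only [Model.sat]
              rw [hval p (hv (by simp [Form.vars]))]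
  | and a b iha ihb =>
      intro hv hm
      simp only [Form.vars, Finset.union_subset_iff] at hv
      simp only [Form.md, Nat.max_eq_zero_iff] at hm
      simp only [Model.sat]
      rw [iha hv.1 hm.1, ihb hv.2 hm.2]
  | or a b iha ihb =>
      intro hv hm
      simp only [Form.vars, Finset.union_subset_iff] at hv
      simp only [Form.md, Nat.max_eq_zero_iff] at hm
      simp only [Model.sat]
      rw [iha hv.1 hm.1, ihb hv.2 hm.2]
  | box a ih => intro _ hm; exact absurd hm (by simp [Form.md])
  | dia a ih => intro _ hm; exact absurd hm (by simp [Form.md])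

/-- Two pointed models satisfying the same normal form of depth d agree on
all formulas over P of modal depth at most d. -/
lemma nf_agree : ∀ (d : ℕ) (P : Finset ℕ) (ψ : Form), ψ ∈ NF P d →
    ∀ (M M' : Model) (w : M.W) (w' : M'.W), M.sat w ψ → M'.sat w' ψ →
    ∀ χ : Form, χ.vars ⊆ P → χ.md ≤ d → (M.sat w χ ↔ M'.sat w' χ) := by
  intro d
  induction d with
  | zero =>
      rintro P ψ ⟨S, _, rfl⟩ M M' w w' hw hw' χ hv hm
      exact agree0 M M' w w' P
        (fun p hp => (nf0_val M w P S hw p hp).trans (nf0_val M' w' P S hw' p hp).symm)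
        χ hv (Nat.le_zero.mp hm)
  | succ d ih =>
      rintro P ψ ⟨S, hS, S0, _, rfl⟩ M M' w w' hw hw' χ hv hm
      obtain ⟨h0, hA, hBx⟩ := hw
      obtain ⟨h0', hA', hBx'⟩ := hw'
      rw [sat_bigAnd] at hA
      rw [sat_bigAnd] at hA'
      -- diamond facts
      have hD : ∀ φ ∈ S, ∃ v, M.R w v ∧ M.sat v φ := by
        intro φ hφ
        exact hA (Form.dia φ) (Finset.mem_image_of_mem _ hφ)
      have hD' : ∀ φ ∈ S, ∃ v', M'.R w' v' ∧ M'.sat v' φ := by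
        intro φ hφ
        exact hA' (Form.dia φ) (Finset.mem_image_of_mem _ hφ)
      -- box facts
      have hB : ∀ v, M.R w v → ∃ φ ∈ S, M.sat v φ := by
        intro v hr; exact (sat_bigOr M v S).mp (hBx v hr)
      have hB' : ∀ v', M'.R w' v' → ∃ φ ∈ S, M'.sat v' φ := by
        intro v' hr; exact (sat_bigOr M' v' S).mp (hBx' v' hr)
      have hval : ∀ p ∈ P, (p ∈ M.V w ↔ p ∈ M'.V w') :=
        fun p hp => (nf0_val M w P S0 h0 p hp).trans (nf0_val M' w' P S0 h0' p hp).symm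
      -- transfer along common child normal forms
      have key : ∀ χ1 : Form, χ1.vars ⊆ P → χ1.md ≤ d →
          ∀ (v : M.W) (v' : M'.W) (φ : Form), φ ∈ S → M.sat v φ → M'.sat v' φ →
          (M.sat v χ1 ↔ M'.sat v' χ1) := by
        intro χ1 hv1 hm1 v v' φ hφ hvφ hv'φ
        exact ih P φ (hS hφ) M M' v v' hvφ hv'φ χ1 hv1 hm1
      clear hA hA' hBx hBx' h0 h0'
      induction χ with
      | bot => simp [Model.sat]
      | top => simp [Model.sat]
      | pos p => exact hval p (hv (by simp [Form.vars]))
      | npos p =>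
          simp only [Model.sat]
          rw [hval p (hv (by simp [Form.vars]))]
      | and a b iha ihb =>
          simp only [Form.vars, Finset.union_subset_iff] at hv
          simp only [Form.md, max_le_iff] at hm
          exact and_congr (iha hv.1 hm.1) (ihb hv.2 hm.2)
      | or a b iha ihb =>
          simp only [Form.vars, Finset.union_subset_iff] at hv
          simp only [Form.md, max_le_iff] at hm
          exact or_congr (iha hv.1 hm.1) (ihb hv.2 hm.2)
      | box a iha =>
          simp only [Form.vars] at hv
          simp only [Form.md, Nat.add_le_add_iff_right] at hm
          simp only [Model.sat]
          constructor
          · intro hb v' hr'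
            obtain ⟨φ, hφ, hv'φ⟩ := hB' v' hr'
            obtain ⟨v, hr, hvφ⟩ := hD φ hφ
            exact (key a hv hm v v' φ hφ hvφ hv'φ).mp (hb v hr)
          · intro hb v hr
            obtain ⟨φ, hφ, hvφ⟩ := hB v hr
            obtain ⟨v', hr', hv'φ⟩ := hD' φ hφ
            exact (key a hv hm v v' φ hφ hvφ hv'φ).mpr (hb v' hr')
      | dia a iha =>
          simp only [Form.vars] at hv
          simp only [Form.md, Nat.add_le_add_iff_right] at hm
          simp only [Model.sat]
          constructor
          · rintro ⟨v, hr, hva⟩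
            obtain ⟨φ, hφ, hvφ⟩ := hB v hr
            obtain ⟨v', hr', hv'φ⟩ := hD' φ hφ
            exact ⟨v', hr', (key a hv hm v v' φ hφ hvφ hv'φ).mp hva⟩
          · rintro ⟨v', hr', hv'a⟩
            obtain ⟨φ, hφ, hv'φ⟩ := hB' v' hr'
            obtain ⟨v, hr, hvφ⟩ := hD φ hφ
            exact ⟨v, hr, (key a hv hm v v' φ hφ hvφ hv'φ).mpr hv'a⟩

lemma valid_K_mono (l : Logic) (φ : Form) (h : Valid Logic.K φ) : Valid l φ := by
  intro M hM w
  exact h M ⟨trivial, fun h5 => by simp [Logic.K] at h5⟩ w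

/-- normal forms are complete up to their depths, for every
logic l among the twelve considered. -/
theorem stmt17 (l : Logic) (P : Finset ℕ) (d : ℕ)
    (ψ : Form) (hψ : ψ ∈ NF P d)
    (χ : Form) (hv : χ.vars ⊆ P) (hd : χ.md ≤ d) :
    Valid l (ψ.imp χ) ∨ Valid l (ψ.imp χ.neg) := by
  by_cases hsat : ∃ (M : Model) (w : M.W), M.sat w ψ
  · obtain ⟨M0, w0, h0⟩ := hsat
    by_cases hc : M0.sat w0 χ
    · left
      apply valid_K_mono
      intro M _ w
      show M.sat w ψ.neg ∨ M.sat w χ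
      by_cases h : M.sat w ψ
      · exact Or.inr ((nf_agree d P ψ hψ M0 M w0 w h0 h χ hv hd).mp hc)
      · exact Or.inl ((sat_neg M ψ w).mpr h)
    · right
      apply valid_K_mono
      intro M _ w
      show M.sat w ψ.neg ∨ M.sat w χ.neg
      by_cases h : M.sat w ψ
      · refine Or.inr ((sat_neg M χ w).mpr fun hx => hc ?_)
        exact (nf_agree d P ψ hψ M M0 w w0 h h0 χ hv hd).mp hx
      · exact Or.inl ((sat_neg M ψ w).mpr h)
  · left
    apply valid_K_mono
    intro M _ w
    exact Or.inl ((sat_neg M ψ w).mpr fun h => hsat ⟨M, w, h⟩)
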